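/- Let t₀ ≤ t₁ be real numbers, let K ≥ 0, and let α : ℝ → ℝ be monotone, Lipschitz with constant K, and satisfy α(0) = 0. Let β : ℝ → ℝ be continuous on [t₀, t₁], differentiable at every point of [t₀, t₁], and suppose β′(t) ≥ -α(β(t)) for all t ∈ [t₀, t₁]. If β(t₀) ≥ 0, then β(t) ≥ 0 for all t ∈ [t₀, t₁]. -/
import Mathlib


/-- Forward-invariance (comparison lemma) for a scalar control barrier function:
if `β' t ≥ -α (β t)` on `[t₀, t₁]` with `α` a Lipschitz, monotone function vanishing
at `0`, and `β t₀ ≥ 0`, then `β t ≥ 0` on `[t₀, t₁]`. -/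
theorem cbf_forward_invariance
    (t₀ t₁ : ℝ) (ht : t₀ ≤ t₁) (K : ℝ) (hK : 0 ≤ K)
    (α : ℝ → ℝ) (hmono : Monotone α) (hlip : LipschitzWith K.toNNReal α)
    (hα0 : α 0 = 0)
    (β : ℝ → ℝ) (hcont : ContinuousOn β (Set.Icc t₀ t₁))
    (hdiff : ∀ t ∈ Set.Icc t₀ t₁, DifferentiableAt ℝ β t)
    (hineq : ∀ t ∈ Set.Icc t₀ t₁, deriv β t ≥ -α (β t))
    (h0 : β t₀ ≥ 0) :
    ∀ t ∈ Set.Icc t₀ t₁, β t ≥ 0 := by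
  rintro t ⟨ht0, ht1⟩
  by_contra hneg
  push_neg at hneg
  set S : Set ℝ := {u | u ∈ Set.Icc t₀ t ∧ 0 ≤ β u} with hS
  have hSne : S.Nonempty := ⟨t₀, ⟨le_refl _, ht0⟩, h0⟩
  have hSbdd : BddAbove S := ⟨t, fun u hu => hu.1.2⟩
  set s := sSup S with hs
  have hsmem : s ∈ Set.Icc t₀ t := by
    constructor
    · exact le_csSup hSbdd ⟨⟨le_refl _, ht0⟩, h0⟩
    · exact csSup_le hSne fun u hu => hu.1.2
  have hsubset : Set.Icc t₀ t ⊆ Set.Icc t₀ t₁ := Set.Icc_subset_Icc le_rfl ht1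
  -- β s ≥ 0 by continuity: s is in the closure of S
  have hβs : 0 ≤ β s := by
    have hcont' : ContinuousOn β (Set.Icc t₀ t) := hcont.mono hsubset
    have hcl : s ∈ closure S := (Real.isLUB_sSup hSne hSbdd).mem_closure hSne
    have hScl : closure S ⊆ {u | u ∈ Set.Icc t₀ t ∧ 0 ≤ β u} := by
      have hclosed : IsClosed {u | u ∈ Set.Icc t₀ t ∧ 0 ≤ β u} := by
        have : {u | u ∈ Set.Icc t₀ t ∧ 0 ≤ β u}
            = Set.Icc t₀ t ∩ {u ∈ Set.Icc t₀ t | β u ∈ Set.Ici 0} := by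
          ext u; simp only [Set.mem_setOf_eq, Set.mem_inter_iff, Set.mem_sep_iff, Set.mem_Ici]; tauto
        rw [this]
        exact (isClosed_Icc.inter
          (hcont'.preimage_isClosed_of_isClosed isClosed_Icc isClosed_Ici))
      exact closure_minimal (fun u hu => hu) hclosed
    exact (hScl hcl).2
  have hst : s < t := by
    rcases lt_or_eq_of_le hsmem.2 with h | h
    · exact h
    · exact absurd (h ▸ hβs) (not_le.mpr hneg)
  -- on (s, t], β < 0
  have hblw : ∀ u ∈ Set.Ioc s t, β u < 0 := by
    intro u hu
    by_contra hb
    push_neg at hb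
    have : u ∈ S := ⟨⟨le_trans hsmem.1 hu.1.le, hu.2⟩, hb⟩
    exact absurd (le_csSup hSbdd this) (not_le.mpr hu.1)
  -- β is monotone on [s, t]
  have hmonoβ : MonotoneOn β (Set.Icc s t) := by
    apply monotoneOn_of_deriv_nonneg (convex_Icc s t)
    · exact hcont.mono (Set.Icc_subset_Icc hsmem.1 ht1)
    · intro u hu
      rw [interior_Icc] at hu
      exact (hdiff u ⟨le_trans hsmem.1 hu.1.le, le_trans hu.2.le ht1⟩).differentiableWithinAt
    · intro u hu
      rw [interior_Icc] at hu
      have humem : u ∈ Set.Icc t₀ t₁ :=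
        ⟨le_trans hsmem.1 hu.1.le, le_trans hu.2.le ht1⟩
      have hβu : β u < 0 := hblw u ⟨hu.1, hu.2.le⟩
      have hαle : α (β u) ≤ 0 := hα0 ▸ hmono hβu.le
      linarith [hineq u humem]
  have := hmonoβ ⟨le_refl s, hst.le⟩ ⟨hst.le, le_refl t⟩ hst.le
  linarith
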